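/- Let W be a second-order working set selection and let (α^(t))_{t ∈ ℕ} be a sequence in R with (f(α^(t)))_{t ∈ ℕ} monotonically increasing. Suppose there are infinitely many t such that α^(t−1) ∉ R*, v_{W(α^(t−1))}ᵀ K v_{W(α^(t−1))} > 0, and α^(t) = α^(t−1) + μ* v_{W(α^(t−1))} ∈ R with the Newton step size μ* = (v_{W(α^(t−1))}ᵀ∇f(α^(t−1))) / (v_{W(α^(t−1))}ᵀ K v_{W(α^(t−1))}) (a free SMO step). Then lim_{t→∞} f(α^(t)) = f*. -/

import Mathlib

open Matrix Filter Topology ENNReal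

namespace SMO

noncomputable section

variable {l : ℕ}

/-- The dual SVM objective `f(α) = yᵀα − (1/2) αᵀKα`. -/
def obj (y : Fin l → ℝ) (K : Matrix (Fin l) (Fin l) ℝ) (α : Fin l → ℝ) : ℝ :=
  y ⬝ᵥ α - (1 / 2) * (α ⬝ᵥ (K *ᵥ α))

/-- The gradient `∇f(α) = y − Kα`. -/
def grad (y : Fin l → ℝ) (K : Matrix (Fin l) (Fin l) ℝ) (α : Fin l → ℝ) : Fin l → ℝ :=
  y - K *ᵥ α

/-- The direction `v_B = e_i − e_j` of a working set `B = (i, j)`. -/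
def dir (B : Fin l × Fin l) : Fin l → ℝ :=
  Pi.single B.1 1 - Pi.single B.2 1

/-- Lower bound `L_i = min {0, y_i C}`. -/
def lb (y : Fin l → ℝ) (C : ℝ) (i : Fin l) : ℝ := min 0 (y i * C)

/-- Upper bound `U_i = max {0, y_i C}`. -/
def ub (y : Fin l → ℝ) (C : ℝ) (i : Fin l) : ℝ := max 0 (y i * C)

/-- The feasible region `R`. -/
def feas (y : Fin l → ℝ) (C : ℝ) : Set (Fin l → ℝ) :=
  {α | (∑ i, α i) = 0 ∧ ∀ i, lb y C i ≤ α i ∧ α i ≤ ub y C i}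

/-- `I_up(α) = {i : α_i < U_i}`. -/
def Iup (y : Fin l → ℝ) (C : ℝ) (α : Fin l → ℝ) : Set (Fin l) := {i | α i < ub y C i}

/-- `I_down(α) = {i : α_i > L_i}`. -/
def Idown (y : Fin l → ℝ) (C : ℝ) (α : Fin l → ℝ) : Set (Fin l) := {i | lb y C i < α i}

/-- The set `B(α)` of working sets feasible at `α`. -/
def wsets (y : Fin l → ℝ) (C : ℝ) (α : Fin l → ℝ) : Set (Fin l × Fin l) :=
  {B | B.1 ∈ Iup y C α ∧ B.2 ∈ Idown y C α ∧ B.1 ≠ B.2}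

/-- The optimal value `f* = max {f(α) : α ∈ R}`. -/
def fstar (y : Fin l → ℝ) (K : Matrix (Fin l) (Fin l) ℝ) (C : ℝ) : ℝ :=
  sSup (obj y K '' feas y C)

/-- The optimal set `R* = {α ∈ R : f(α) = f*}`. -/
def opt (y : Fin l → ℝ) (K : Matrix (Fin l) (Fin l) ℝ) (C : ℝ) : Set (Fin l → ℝ) :=
  {α ∈ feas y C | obj y K α = fstar y K C}

/-- The gap function `ψ(α) = max {v_Bᵀ ∇f(α) : B ∈ B(α)}`. -/
def psi (y : Fin l → ℝ) (K : Matrix (Fin l) (Fin l) ℝ) (C : ℝ) (α : Fin l → ℝ) : ℝ :=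
  sSup ((fun B => dir B ⬝ᵥ grad y K α) '' wsets y C α)

/-- The Newton-step gain `g̃_B(α) = (v_Bᵀ∇f(α))² / (2 v_BᵀKv_B) ∈ [0, ∞]`, with the
conventions `g̃_B(α) = 0` if `v_BᵀKv_B = 0` and `v_Bᵀ∇f(α) = 0`, and `g̃_B(α) = ∞` if
`v_BᵀKv_B = 0` and `v_Bᵀ∇f(α) ≠ 0`. -/
def ngain (y : Fin l → ℝ) (K : Matrix (Fin l) (Fin l) ℝ) (B : Fin l × Fin l)
    (α : Fin l → ℝ) : ℝ≥0∞ :=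
  if dir B ⬝ᵥ (K *ᵥ dir B) = 0 then
    (if dir B ⬝ᵥ grad y K α = 0 then 0 else ⊤)
  else ENNReal.ofReal ((dir B ⬝ᵥ grad y K α) ^ 2 / (2 * (dir B ⬝ᵥ (K *ᵥ dir B))))

/-- A second-order working set selection: on every non-optimal feasible `α` it returns a
working set `W(α) = (i, j) ∈ B(α)` such that `i` maximizes `(∇f(α))_n` over `n ∈ I_up(α)`
and `j` maximizes `g̃_{(i,n)}(α)` over `n ∈ I_down(α) \ {i}`. -/
def IsSecondOrderWSS (y : Fin l → ℝ) (K : Matrix (Fin l) (Fin l) ℝ) (C : ℝ)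
    (W : (Fin l → ℝ) → Fin l × Fin l) : Prop :=
  ∀ α ∈ feas y C \ opt y K C,
    W α ∈ wsets y C α ∧
    (∀ n ∈ Iup y C α, grad y K α n ≤ grad y K α (W α).1) ∧
    (∀ n ∈ Idown y C α, n ≠ (W α).1 → ngain y K ((W α).1, n) α ≤ ngain y K (W α) α)

lemma symmK (K : Matrix (Fin l) (Fin l) ℝ) (hK : K.PosSemidef) (x z : Fin l → ℝ) :
    (K *ᵥ x) ⬝ᵥ z = x ⬝ᵥ (K *ᵥ z) := by
  calc (K *ᵥ x) ⬝ᵥ z = z ⬝ᵥ (K *ᵥ x) := dotProduct_comm _ _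
    _ = (z ᵥ* K) ⬝ᵥ x := Matrix.dotProduct_mulVec _ _ _
    _ = (Kᵀ *ᵥ z) ⬝ᵥ x := by rw [Matrix.mulVec_transpose]
    _ = (K *ᵥ z) ⬝ᵥ x := by rw [show Kᵀ = K from hK.1]
    _ = x ⬝ᵥ (K *ᵥ z) := dotProduct_comm _ _

lemma dir_dot (B : Fin l × Fin l) (w : Fin l → ℝ) : dir B ⬝ᵥ w = w B.1 - w B.2 := by
  simp [dir, sub_dotProduct]

lemma obj_add_smul (y : Fin l → ℝ) (K : Matrix (Fin l) (Fin l) ℝ) (hK : K.PosSemidef)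
    (α v : Fin l → ℝ) (μ : ℝ) :
    obj y K (α + μ • v) = obj y K α + μ * (v ⬝ᵥ grad y K α)
      - μ ^ 2 / 2 * (v ⬝ᵥ (K *ᵥ v)) := by
  have h1 : α ⬝ᵥ (K *ᵥ v) = v ⬝ᵥ (K *ᵥ α) := by
    rw [← symmK K hK, dotProduct_comm]
  simp only [obj, grad, Matrix.mulVec_add, Matrix.mulVec_smul, dotProduct_add,
    add_dotProduct, dotProduct_smul, smul_dotProduct, dotProduct_sub, smul_eq_mul, h1,
    dotProduct_comm y v]
  ring

lemma obj_concave_le (y : Fin l → ℝ) (K : Matrix (Fin l) (Fin l) ℝ) (hK : K.PosSemidef)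
    (α β : Fin l → ℝ) :
    obj y K β ≤ obj y K α + (grad y K α) ⬝ᵥ (β - α) := by
  have h := obj_add_smul y K hK α (β - α) 1
  have hβ : α + (1:ℝ) • (β - α) = β := by simp
  rw [hβ] at h
  have hnn : 0 ≤ (β - α) ⬝ᵥ (K *ᵥ (β - α)) := by
    have := hK.dotProduct_mulVec_nonneg (β - α); rwa [star_trivial] at this
  rw [h, dotProduct_comm]
  nlinarith

lemma cont_dot_grad (y : Fin l → ℝ) (K : Matrix (Fin l) (Fin l) ℝ) (v : Fin l → ℝ) :
    Continuous (fun α => v ⬝ᵥ grad y K α) := by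
  simp only [grad, dotProduct, Matrix.mulVec, Pi.sub_apply]
  fun_prop

lemma cont_obj (y : Fin l → ℝ) (K : Matrix (Fin l) (Fin l) ℝ) :
    Continuous (obj y K) := by
  have h : obj y K = fun α => ∑ i, y i * α i - 1 / 2 * ∑ i, α i * ∑ j, K i j * α j := by
    funext α
    simp [obj, dotProduct, Matrix.mulVec]
  rw [h]
  fun_prop

lemma isCompact_feas (y : Fin l → ℝ) (C : ℝ) : IsCompact (feas y C) := by
  have hsub : feas y C ⊆ Set.pi Set.univ (fun i => Set.Icc (lb y C i) (ub y C i)) := by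
    intro α hα i _
    exact ⟨(hα.2 i).1, (hα.2 i).2⟩
  have hcpt : IsCompact (Set.pi Set.univ (fun i => Set.Icc (lb y C i) (ub y C i))) :=
    isCompact_univ_pi fun i => isCompact_Icc
  refine hcpt.of_isClosed_subset ?_ hsub
  have h1 : IsClosed {α : Fin l → ℝ | (∑ i, α i) = 0} :=
    isClosed_eq (by fun_prop) continuous_const
  have h2 : IsClosed {α : Fin l → ℝ | ∀ i, lb y C i ≤ α i ∧ α i ≤ ub y C i} := by
    have : {α : Fin l → ℝ | ∀ i, lb y C i ≤ α i ∧ α i ≤ ub y C i} =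
        Set.pi Set.univ (fun i => Set.Icc (lb y C i) (ub y C i)) := by
      ext α; simp [Set.mem_pi, Set.mem_Icc, Pi.le_def, forall_and]
    rw [this]
    exact isClosed_set_pi fun i _ => isClosed_Icc
  exact h1.inter h2

lemma grad_dot_sub_le (y : Fin l → ℝ) (K : Matrix (Fin l) (Fin l) ℝ) (C : ℝ)
    (A β : Fin l → ℝ) (hA : A ∈ feas y C) (hβ : β ∈ feas y C)
    (hkkt : ∀ B ∈ wsets y C A, dir B ⬝ᵥ grad y K A ≤ 0) :
    (grad y K A) ⬝ᵥ (β - A) ≤ 0 := by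
  set g := grad y K A with hg
  set d : Fin l → ℝ := β - A with hd
  have hsum : ∑ n, d n = 0 := by
    have : ∑ n, d n = (∑ n, β n) - (∑ n, A n) := by
      simp [hd, Finset.sum_sub_distrib]
    rw [this, hβ.1, hA.1, sub_zero]
  have hup : ∀ n, 0 < d n → n ∈ Iup y C A := by
    intro n hn
    have : A n < β n := by simpa [hd, sub_pos] using hn
    exact lt_of_lt_of_le this (hβ.2 n).2
  have hdown : ∀ n, d n < 0 → n ∈ Idown y C A := by
    intro n hn
    have : β n < A n := by simpa [hd, sub_neg] using hn
    exact lt_of_le_of_lt (hβ.2 n).1 this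
  set N : Finset (Fin l) := Finset.univ.filter (fun n => d n < 0) with hN
  rcases N.eq_empty_or_nonempty with hNe | hNne
  · -- all d n ≥ 0, sum zero ⇒ all zero
    have hnn : ∀ n ∈ Finset.univ, (0:ℝ) ≤ d n := by
      intro n _
      by_contra h
      push_neg at h
      have : n ∈ N := by simp [hN, h]
      simp [hNe] at this
    have hz : ∀ n ∈ Finset.univ, d n = 0 :=
      (Finset.sum_eq_zero_iff_of_nonneg hnn).1 hsum
    have : g ⬝ᵥ d = 0 := by
      unfold dotProduct
      exact Finset.sum_eq_zero fun n hn => by rw [hz n hn, mul_zero]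
    rw [this]
  · obtain ⟨j0, hj0N, hj0min⟩ := N.exists_min_image g hNne
    have hj0d : d j0 < 0 := (Finset.mem_filter.1 hj0N).2
    have hj0down : j0 ∈ Idown y C A := hdown j0 hj0d
    have key : ∀ n, g n * d n ≤ g j0 * d n := by
      intro n
      rcases lt_trichotomy (d n) 0 with h | h | h
      · have hnN : n ∈ N := by simp [hN, h]
        exact mul_le_mul_of_nonpos_right (hj0min n hnN) h.le
      · simp [h]
      · have hnup : n ∈ Iup y C A := hup n h
        have hne : n ≠ j0 := by
          intro he; rw [he] at h; linarith
        have := hkkt (n, j0) ⟨hnup, hj0down, hne⟩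
        rw [dir_dot] at this
        have : g n ≤ g j0 := by simpa using this
        exact mul_le_mul_of_nonneg_right this h.le
    calc g ⬝ᵥ d = ∑ n, g n * d n := rfl
      _ ≤ ∑ n, g j0 * d n := Finset.sum_le_sum fun n _ => key n
      _ = g j0 * ∑ n, d n := by rw [Finset.mul_sum]
      _ = 0 := by rw [hsum, mul_zero]

/-- If `(f(α^(t)))` is monotonically increasing and there are infinitely
many `t` such that `α^(t) ∉ R*`, `v_{W(α^(t))}ᵀKv_{W(α^(t))} > 0`, and
`α^(t+1) = α^(t) + μ* v_{W(α^(t))} ∈ R` with the Newton step size `μ*` (a free SMO step),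
then `f(α^(t)) → f*`. -/
theorem convergence_free_steps
    (hl : 2 ≤ l) (y : Fin l → ℝ) (hy : ∀ i, y i = 1 ∨ y i = -1)
    (K : Matrix (Fin l) (Fin l) ℝ) (hK : K.PosSemidef) (C : ℝ) (hC : 0 < C)
    (W : (Fin l → ℝ) → Fin l × Fin l) (hW : IsSecondOrderWSS y K C W)
    (a : ℕ → Fin l → ℝ) (ha : ∀ t, a t ∈ feas y C)
    (hmono : Monotone fun t => obj y K (a t))
    (hfree : {t : ℕ |
        a t ∉ opt y K C ∧
        0 < dir (W (a t)) ⬝ᵥ (K *ᵥ dir (W (a t))) ∧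
        a (t + 1) = a t +
          ((dir (W (a t)) ⬝ᵥ grad y K (a t)) /
            (dir (W (a t)) ⬝ᵥ (K *ᵥ dir (W (a t))))) • dir (W (a t)) ∧
        a (t + 1) ∈ feas y C}.Infinite) :
    Tendsto (fun t => obj y K (a t)) atTop (𝓝 (fstar y K C)) := by
  classical
  have hcont : Continuous (obj y K) := cont_obj y K
  have hcomp : IsCompact (feas y C) := isCompact_feas y C
  have hbdd : BddAbove (obj y K '' feas y C) := (hcomp.image hcont).bddAbove
  have hub : ∀ t, obj y K (a t) ≤ fstar y K C := fun t =>
    le_csSup hbdd ⟨a t, ha t, rfl⟩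
  have hbdd' : BddAbove (Set.range fun t => obj y K (a t)) :=
    ⟨fstar y K C, by rintro x ⟨t, rfl⟩; exact hub t⟩
  have hLtend : Tendsto (fun t => obj y K (a t)) atTop (𝓝 (⨆ t, obj y K (a t))) :=
    tendsto_atTop_ciSup hmono hbdd'
  set L := ⨆ t, obj y K (a t) with hL
  suffices hLf : L = fstar y K C by rw [← hLf]; exact hLtend
  have hLle : L ≤ fstar y K C := ciSup_le hub
  -- extract a convergent subsequence of free-step iterates
  set p : ℕ → Prop := fun t =>
      a t ∉ opt y K C ∧
      0 < dir (W (a t)) ⬝ᵥ (K *ᵥ dir (W (a t))) ∧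
      a (t + 1) = a t +
        ((dir (W (a t)) ⬝ᵥ grad y K (a t)) /
          (dir (W (a t)) ⬝ᵥ (K *ᵥ dir (W (a t))))) • dir (W (a t)) ∧
      a (t + 1) ∈ feas y C with hpdef
  have hpinf : (setOf p).Infinite := hfree
  have hnmem : ∀ k, p (Nat.nth p k) := fun k => Nat.nth_mem_of_infinite hpinf k
  have hnmono : StrictMono (Nat.nth p) := Nat.nth_strictMono hpinf
  obtain ⟨A, hA, φ, hφ, hbt⟩ :=
    hcomp.tendsto_subseq (x := fun k => a (Nat.nth p k)) (fun k => ha (Nat.nth p k))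
  set m : ℕ → ℕ := fun k => Nat.nth p (φ k) with hmdef
  have hmmono : StrictMono m := hnmono.comp hφ
  have hmmem : ∀ k, p (m k) := fun k => hnmem (φ k)
  have hbt' : Tendsto (fun k => a (m k)) atTop (𝓝 A) := hbt
  have hf1 : Tendsto (fun k => obj y K (a (m k))) atTop (𝓝 L) :=
    hLtend.comp hmmono.tendsto_atTop
  have hf2 : Tendsto (fun k => obj y K (a (m k + 1))) atTop (𝓝 L) :=
    hLtend.comp (tendsto_atTop_mono
      (fun k => (hmmono.le_apply.trans (Nat.le_succ (m k)))) tendsto_id)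
  have hdiff : Tendsto (fun k => obj y K (a (m k + 1)) - obj y K (a (m k))) atTop (𝓝 0) := by
    simpa using hf2.sub hf1
  have hfA : obj y K A = L :=
    tendsto_nhds_unique ((hcont.tendsto A).comp hbt') hf1
  -- KKT conditions hold at the limit point A
  have hkkt : ∀ B ∈ wsets y C A, dir B ⬝ᵥ grad y K A ≤ 0 := by
    by_contra hcontra
    push_neg at hcontra
    obtain ⟨B, hB, hBpos⟩ := hcontra
    set dval := dir B ⬝ᵥ grad y K A with hdval
    have hl0 : 0 < l := by omega
    have hnel : Nonempty (Fin l × Fin l) := ⟨⟨⟨0, hl0⟩, ⟨0, hl0⟩⟩⟩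
    set σ : ℝ := Finset.univ.sup' Finset.univ_nonempty
      (fun B' : Fin l × Fin l => dir B' ⬝ᵥ (K *ᵥ dir B')) with hσdef
    set σ' : ℝ := max σ 1 with hσ'def
    have hσ'pos : (0:ℝ) < σ' := lt_of_lt_of_le one_pos (le_max_right _ _)
    set ε : ℝ := (dval / 2) ^ 2 / (2 * σ') with hεdef
    have hεpos : 0 < ε := by positivity
    have e1 : ∀ᶠ k in atTop, dval / 2 < dir B ⬝ᵥ grad y K (a (m k)) :=
      (((cont_dot_grad y K (dir B)).tendsto A).comp hbt').eventually
        (eventually_gt_nhds (by linarith))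
    have e2 : ∀ᶠ k in atTop, a (m k) B.1 < ub y C B.1 :=
      (((continuous_apply B.1).tendsto A).comp hbt').eventually
        (eventually_lt_nhds (show A B.1 < ub y C B.1 from hB.1))
    have e3 : ∀ᶠ k in atTop, lb y C B.2 < a (m k) B.2 :=
      (((continuous_apply B.2).tendsto A).comp hbt').eventually
        (eventually_gt_nhds (show lb y C B.2 < A B.2 from hB.2.1))
    have e4 : ∀ᶠ k in atTop, obj y K (a (m k + 1)) - obj y K (a (m k)) < ε :=
      hdiff.eventually (eventually_lt_nhds hεpos)
    obtain ⟨k, h1, h2, h3, h4⟩ := (e1.and (e2.and (e3.and e4))).exists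
    obtain ⟨hnopt, hcpos, hstep, hfeas2⟩ := hmmem k
    obtain ⟨hWmem, hWgrad, hWgain⟩ := hW (a (m k)) ⟨ha (m k), hnopt⟩
    have hpIup : B.1 ∈ Iup y C (a (m k)) := h2
    have hqIdown : B.2 ∈ Idown y C (a (m k)) := h3
    have hip : grad y K (a (m k)) B.1 ≤ grad y K (a (m k)) (W (a (m k))).1 :=
      hWgrad B.1 hpIup
    have h1' : dval / 2 < grad y K (a (m k)) B.1 - grad y K (a (m k)) B.2 := by
      have := h1; rwa [dir_dot] at this
    set i := (W (a (m k))).1 with hidef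
    set q := B.2 with hqdef
    have hsq : dval / 2 < grad y K (a (m k)) i - grad y K (a (m k)) q := by linarith
    have hdvalpos : 0 < dval := hBpos
    have hqi : q ≠ i := by
      intro he; rw [he] at hsq; simp at hsq; linarith
    have hgain := hWgain q hqIdown hqi
    have hcne : dir (W (a (m k))) ⬝ᵥ (K *ᵥ dir (W (a (m k)))) ≠ 0 := ne_of_gt hcpos
    set s : ℝ := dir (W (a (m k))) ⬝ᵥ grad y K (a (m k)) with hsdef
    have hngW : ngain y K (W (a (m k))) (a (m k)) =
        ENNReal.ofReal (s ^ 2 / (2 * (dir (W (a (m k))) ⬝ᵥ (K *ᵥ dir (W (a (m k))))))) := by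
      rw [ngain, if_neg hcne]
    have hfd : obj y K (a (m k + 1)) - obj y K (a (m k)) =
        s ^ 2 / (2 * (dir (W (a (m k))) ⬝ᵥ (K *ᵥ dir (W (a (m k)))))) := by
      rw [hstep, obj_add_smul y K hK]
      field_simp
      ring
    set sq : ℝ := dir (i, q) ⬝ᵥ grad y K (a (m k)) with hsqdef
    have hsqval : dval / 2 < sq := by
      rw [hsqdef, dir_dot]; exact hsq
    have hsqpos : 0 < sq := lt_trans (by linarith) hsqval
    set c : ℝ := dir (i, q) ⬝ᵥ (K *ᵥ dir (i, q)) with hcdef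
    have hc0 : 0 ≤ c := by
      have := hK.dotProduct_mulVec_nonneg (dir (i, q)); rwa [star_trivial] at this
    have hfdnn : 0 ≤ s ^ 2 / (2 * (dir (W (a (m k))) ⬝ᵥ (K *ᵥ dir (W (a (m k)))))) := by
      positivity
    rcases eq_or_lt_of_le hc0 with hceq | hcpos2
    · have htop : ngain y K (i, q) (a (m k)) = ⊤ := by
        rw [ngain, if_pos hceq.symm, if_neg (ne_of_gt hsqpos)]
      rw [htop, hngW, top_le_iff] at hgain
      exact ENNReal.ofReal_ne_top hgain
    · have hng2 : ngain y K (i, q) (a (m k)) = ENNReal.ofReal (sq ^ 2 / (2 * c)) := by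
        rw [ngain, if_neg (ne_of_gt hcpos2)]
      rw [hng2, hngW, ENNReal.ofReal_le_ofReal_iff hfdnn] at hgain
      have hcσ : c ≤ σ := by
        rw [hcdef, hσdef]
        exact Finset.le_sup' (fun B' : Fin l × Fin l => dir B' ⬝ᵥ (K *ᵥ dir B'))
          (Finset.mem_univ (i, q))
      have hcσ' : c ≤ σ' := hcσ.trans (le_max_left _ _)
      have hnum : (dval / 2) ^ 2 ≤ sq ^ 2 := by nlinarith
      have hεle : ε ≤ sq ^ 2 / (2 * c) := by
        rw [hεdef]
        apply div_le_div₀ (by positivity) hnum (by positivity)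
        linarith
      rw [← hfd] at hgain
      linarith
  -- conclude optimality of A, hence L = f*
  have hopt : ∀ β ∈ feas y C, obj y K β ≤ obj y K A := by
    intro β hβ
    have h1 := obj_concave_le y K hK A β
    have h2 := grad_dot_sub_le y K C A β hA hβ hkkt
    linarith
  have hge : fstar y K C ≤ L := by
    rw [← hfA]
    exact csSup_le ⟨obj y K (a 0), a 0, ha 0, rfl⟩
      (by rintro x ⟨β, hβ, rfl⟩; exact hopt β hβ)
  linarith

end

end SMO
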